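/- For each $r \in [0,\infty]$, the map $\theta(r): \Lambda \to \mathbb{L}$ defined on the monomial basis by $\theta(r)(m_{(n)}) = nr$ for one-part partitions $(n)$ and $\theta(r)(m_\lambda) = \infty$ for all other partitions, is a rig homomorphism from $\Lambda$ to the min-plus rig $\mathbb{L}$. -/

import Mathlib

open scoped Classical ENNReal
open Tropical

noncomputable section

/-- The Lawvere quantale `𝕃 = [0,∞]` viewed as a rig: addition is `min`, multiplication is `+`. -/
abbrev Trop : Type := Tropical ℝ≥0∞

/-- Coefficient of a formal power series in infinitely many variables. -/
def cf {σ : Type} (φ : MvPowerSeries σ ℕ) (d : σ →₀ ℕ) : ℕ := MvPowerSeries.coeff d φ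

/-- The multiset of nonzero entries of an exponent vector. -/
def parts (d : ℕ →₀ ℕ) : Multiset ℕ := d.support.val.map d

lemma zero_not_mem_parts (d : ℕ →₀ ℕ) : (0 : ℕ) ∉ parts d := by
  intro h
  obtain ⟨a, ha, ha0⟩ := Multiset.mem_map.mp h
  exact Finsupp.mem_support_iff.mp (Finset.mem_val.mp ha) ha0

/-- Partitions: multisets of positive natural numbers. -/
def Ptn : Type := {s : Multiset ℕ // (0 : ℕ) ∉ s}

/-- The monomial symmetric function `m_λ`, as a symmetric power series of bounded degree
in the variables `x_0, x_1, x_2, …`. -/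
def mfun (l : Multiset ℕ) : MvPowerSeries ℕ ℕ := fun d => if parts d = l then 1 else 0

/-- `Λ`, the rig of symmetric functions with coefficients in `ℕ`: the subsemiring of
power series generated by the monomial symmetric functions. -/
def Lam : Subsemiring (MvPowerSeries ℕ ℕ) :=
  Subsemiring.closure (Set.range fun l : Ptn => mfun l.1)

/-- `m_λ` as an element of `Λ`. -/
def mP (l : Ptn) : Lam := ⟨mfun l.1, Subsemiring.subset_closure (Set.mem_range_self l)⟩

/-- The one-part partition `(n)`. -/
def pnat (n : ℕ) (hn : 0 < n) : Ptn := ⟨{n}, fun h => hn.ne' (Multiset.mem_singleton.mp h).symm⟩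

/-- The Witt vectors of the Lawvere quantale: rig homomorphisms `Λ → 𝕃`. -/
abbrev WL := Lam →+* Trop

/-- Row margin of an exponent vector on `ℕ × ℕ`. -/
def rowM (e : (ℕ × ℕ) →₀ ℕ) : ℕ →₀ ℕ := e.mapDomain Prod.fst
/-- Column margin of an exponent vector on `ℕ × ℕ`. -/
def colM (e : (ℕ × ℕ) →₀ ℕ) : ℕ →₀ ℕ := e.mapDomain Prod.snd

/-- The elementary tensor `a ⊗ b` in `Λ ⊗ Λ`, realized as a power series on variables
`x_i ⊗ x_j` indexed by `ℕ × ℕ`. -/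
def tens (a b : MvPowerSeries ℕ ℕ) : MvPowerSeries (ℕ × ℕ) ℕ :=
  fun e => cf a (rowM e) * cf b (colM e)

/-- Comultiplication `Δ^×`: substitute the family `x_i ⊗ x_j` for the variables,
along a bijection `ℕ ≃ ℕ × ℕ`. -/
def Dmul (eqt : ℕ ≃ ℕ × ℕ) (φ : MvPowerSeries ℕ ℕ) : MvPowerSeries (ℕ × ℕ) ℕ :=
  fun e => cf φ (Finsupp.equivMapDomain eqt.symm e)

/-- Left margin of an exponent vector on `ℕ ⊕ ℕ`. -/
def lM (e : (ℕ ⊕ ℕ) →₀ ℕ) : ℕ →₀ ℕ := Finsupp.comapDomain Sum.inl e Sum.inl_injective.injOn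
/-- Right margin of an exponent vector on `ℕ ⊕ ℕ`. -/
def rM (e : (ℕ ⊕ ℕ) →₀ ℕ) : ℕ →₀ ℕ := Finsupp.comapDomain Sum.inr e Sum.inr_injective.injOn

/-- The elementary tensor `a ⊗ b` realized as a power series on `ℕ ⊕ ℕ`. -/
def tensP (a b : MvPowerSeries ℕ ℕ) : MvPowerSeries (ℕ ⊕ ℕ) ℕ :=
  fun e => cf a (lM e) * cf b (rM e)

/-- Coaddition `Δ^+`: substitute `x_i ⊗ 1` and `1 ⊗ x_i` for the variables,
along a bijection `ℕ ≃ ℕ ⊕ ℕ`. -/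
def Dadd (eqp : ℕ ≃ ℕ ⊕ ℕ) (φ : MvPowerSeries ℕ ℕ) : MvPowerSeries (ℕ ⊕ ℕ) ℕ :=
  fun e => cf φ (Finsupp.equivMapDomain eqp.symm e)

/-- The order on `𝕎(𝕃)`: `f ≤ g` iff `g (m_λ) ≤ f (m_λ)` (usual order on `[0,∞]`)
for every partition `λ ∈ ℙ`. -/
def leF (F G : Lam → Trop) : Prop :=
  ∀ l : Ptn, l.1 ≠ 0 → untrop (G (mP l)) ≤ untrop (F (mP l))

/-- Witt multiplication: `(f ⊗ g)(φ) = min` of `f(m_μ) + g(m_μ')` over the pairs `(μ, μ')`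
occurring in `Δ^×(φ)`. -/
def wmulF (eqt : ℕ ≃ ℕ × ℕ) (F G : Lam → Trop) : Lam → Trop := fun φ =>
  trop (sInf {x : ℝ≥0∞ | ∃ e, cf (Dmul eqt (φ : MvPowerSeries ℕ ℕ)) e ≠ 0 ∧
    x = untrop (F (mP ⟨parts (rowM e), zero_not_mem_parts _⟩)) +
        untrop (G (mP ⟨parts (colM e), zero_not_mem_parts _⟩))})

/-- Witt addition: `(f ⊕ g)(φ) = min` of `f(m_μ) + g(m_μ')` over the pairs `(μ, μ')`
occurring in `Δ^+(φ)`. -/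
def waddF (eqp : ℕ ≃ ℕ ⊕ ℕ) (F G : Lam → Trop) : Lam → Trop := fun φ =>
  trop (sInf {x : ℝ≥0∞ | ∃ e, cf (Dadd eqp (φ : MvPowerSeries ℕ ℕ)) e ≠ 0 ∧
    x = untrop (F (mP ⟨parts (lM e), zero_not_mem_parts _⟩)) +
        untrop (G (mP ⟨parts (rM e), zero_not_mem_parts _⟩))})

/-- Specification of the multiplicative unit `0̄` of `𝕎(𝕃)`:
`0̄(m_(n)) = 0` for one-part partitions and `0̄(m_λ) = ∞` otherwise. -/
def zbar (z : WL) : Prop :=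
  ∀ l : Ptn, z (mP l) = if l.1.card ≤ 1 then trop (0 : ℝ≥0∞) else trop (⊤ : ℝ≥0∞)


/-! ### Auxiliary construction: evaluation at a single variable, tropicalized -/

/-- The set of exponents `n` such that the coefficient of `x₀ⁿ` in `φ` is nonzero. -/
def Eset (φ : MvPowerSeries ℕ ℕ) : Set ℕ := {n | cf φ (Finsupp.single 0 n) ≠ 0}

/-- The tropical valuation: `min` of `n·r` over `n ∈ Eset φ`. -/
def Vv (r : ℝ≥0∞) (φ : MvPowerSeries ℕ ℕ) : ℝ≥0∞ :=
  sInf ((fun n : ℕ => (n : ℝ≥0∞) * r) '' Eset φ)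

lemma single_of_add_eq {d1 d2 : ℕ →₀ ℕ} {n : ℕ} (h : d1 + d2 = Finsupp.single 0 n) :
    d1 = Finsupp.single 0 (d1 0) := by
  ext i
  rcases eq_or_ne i 0 with rfl | hi
  · simp
  · have h2 : d1 i + d2 i = 0 := by
      have := DFunLike.congr_fun h i
      simpa [Finsupp.single_apply, (Ne.symm hi)] using this
    simp [Finsupp.single_apply, Ne.symm hi, Nat.eq_zero_of_add_eq_zero_right h2]

lemma Eset_mul (φ ψ : MvPowerSeries ℕ ℕ) :
    Eset (φ * ψ) = {n | ∃ a ∈ Eset φ, ∃ b ∈ Eset ψ, a + b = n} := by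
  ext n
  simp only [Eset, Set.mem_setOf_eq, cf, MvPowerSeries.coeff_mul]
  constructor
  · intro h
    obtain ⟨p, hp, hne⟩ := Finset.exists_ne_zero_of_sum_ne_zero h
    rw [Finset.HasAntidiagonal.mem_antidiagonal] at hp
    obtain ⟨h1, h2⟩ := mul_ne_zero_iff.mp hne
    refine ⟨p.1 0, ?_, p.2 0, ?_, ?_⟩
    · rwa [← single_of_add_eq hp]
    · rw [add_comm] at hp
      rwa [← single_of_add_eq hp]
    · have := DFunLike.congr_fun hp 0
      simpa using this
  · rintro ⟨a, ha, b, hb, rfl⟩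
    intro h
    rw [Finset.sum_eq_zero_iff] at h
    have hmem : ((Finsupp.single 0 a, Finsupp.single 0 b) : (ℕ →₀ ℕ) × (ℕ →₀ ℕ)) ∈
        Finset.HasAntidiagonal.antidiagonal (Finsupp.single 0 (a + b)) := by
      rw [Finset.HasAntidiagonal.mem_antidiagonal, ← Finsupp.single_add]
    exact mul_ne_zero ha hb (h _ hmem)

lemma Eset_add (φ ψ : MvPowerSeries ℕ ℕ) : Eset (φ + ψ) = Eset φ ∪ Eset ψ := by
  ext n
  simp only [Eset, Set.mem_setOf_eq, cf, map_add, Set.mem_union]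
  omega

lemma Eset_one : Eset 1 = {0} := by
  ext n
  simp [Eset, cf, MvPowerSeries.coeff_one, Finsupp.single_eq_zero]

lemma Eset_zero : Eset 0 = ∅ := by
  ext n; simp [Eset, cf]

lemma Vv_nonempty (r : ℝ≥0∞) {φ : MvPowerSeries ℕ ℕ} (h : (Eset φ).Nonempty) :
    Vv r φ = ((sInf (Eset φ) : ℕ) : ℝ≥0∞) * r := by
  apply le_antisymm
  · exact sInf_le ⟨_, Nat.sInf_mem h, rfl⟩
  · refine le_sInf ?_
    rintro x ⟨n, hn, rfl⟩
    exact mul_le_mul_left (Nat.cast_le.mpr (Nat.sInf_le hn)) r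

lemma Vv_mul (r : ℝ≥0∞) (φ ψ : MvPowerSeries ℕ ℕ) :
    Vv r (φ * ψ) = Vv r φ + Vv r ψ := by
  rcases Set.eq_empty_or_nonempty (Eset φ) with hφ | hφ
  · have h1 : Eset (φ * ψ) = ∅ := by
      rw [Eset_mul]
      ext n
      simp only [Set.mem_setOf_eq, Set.mem_empty_iff_false, iff_false]
      rintro ⟨a, ha, _⟩
      exact absurd ha (by simp [hφ])
    simp [Vv, h1, hφ]
  rcases Set.eq_empty_or_nonempty (Eset ψ) with hψ | hψ
  · have h1 : Eset (φ * ψ) = ∅ := by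
      rw [Eset_mul]
      ext n
      simp only [Set.mem_setOf_eq, Set.mem_empty_iff_false, iff_false]
      rintro ⟨a, ha, b, hb, _⟩
      exact absurd hb (by simp [hψ])
    simp [Vv, h1, hψ]
  have hmem : sInf (Eset φ) + sInf (Eset ψ) ∈ Eset (φ * ψ) := by
    rw [Eset_mul]
    exact ⟨_, Nat.sInf_mem hφ, _, Nat.sInf_mem hψ, rfl⟩
  have hsInf : sInf (Eset (φ * ψ)) = sInf (Eset φ) + sInf (Eset ψ) := by
    apply le_antisymm (Nat.sInf_le hmem)
    refine le_csInf ⟨_, hmem⟩ ?_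
    intro n hn
    rw [Eset_mul] at hn
    obtain ⟨a, ha, b, hb, rfl⟩ := hn
    exact add_le_add (Nat.sInf_le ha) (Nat.sInf_le hb)
  rw [Vv_nonempty r ⟨_, hmem⟩, Vv_nonempty r hφ, Vv_nonempty r hψ, hsInf]
  push_cast
  rw [add_mul]

lemma Vv_add (r : ℝ≥0∞) (φ ψ : MvPowerSeries ℕ ℕ) :
    Vv r (φ + ψ) = min (Vv r φ) (Vv r ψ) := by
  rw [Vv, Eset_add, Set.image_union, sInf_union]
  rfl

lemma Vv_one (r : ℝ≥0∞) : Vv r 1 = 0 := by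
  simp [Vv, Eset_one]

lemma Vv_zero (r : ℝ≥0∞) : Vv r 0 = ⊤ := by
  simp [Vv, Eset_zero]

/-- The homomorphism `θ(r) : Λ → 𝕃`. -/
def thetaHom (r : ℝ≥0∞) : WL where
  toFun φ := trop (Vv r (φ : MvPowerSeries ℕ ℕ))
  map_one' := by
    show trop (Vv r 1) = 1
    rw [Vv_one]; exact trop_zero
  map_mul' a b := by
    show trop (Vv r ((a : MvPowerSeries ℕ ℕ) * b)) = trop (Vv r a) * trop (Vv r b)
    rw [Vv_mul]; exact trop_add _ _
  map_zero' := by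
    show trop (Vv r 0) = 0
    rw [Vv_zero]; exact trop_top
  map_add' a b := by
    show trop (Vv r ((a : MvPowerSeries ℕ ℕ) + b)) = trop (Vv r a) + trop (Vv r b)
    rw [Vv_add]; exact trop_min _ _

lemma parts_single {n : ℕ} (hn : n ≠ 0) : parts (Finsupp.single 0 n) = {n} := by
  simp [parts, Finsupp.support_single_ne_zero _ hn]

lemma parts_zero' : parts (0 : ℕ →₀ ℕ) = 0 := by
  simp [parts]

lemma mem_Eset_mfun (l : Multiset ℕ) (n : ℕ) :
    n ∈ Eset (mfun l) ↔ parts (Finsupp.single 0 n) = l := by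
  show (if parts (Finsupp.single 0 n) = l then 1 else 0) ≠ 0 ↔ _
  split <;> simp_all

/-- For each `r ∈ [0,∞]`, the map `θ(r) : Λ → 𝕃` defined on the monomial basis by
`θ(r)(m_(n)) = n·r` for one-part partitions `(n)` and `θ(r)(m_λ) = ∞` for all other
(nonempty) partitions, is a rig homomorphism from `Λ` to the min-plus rig `𝕃`. -/
theorem theta_is_rig_hom (r : ℝ≥0∞) :
    ∃ F : WL, ∀ l : Ptn, l.1 ≠ 0 →
      F (mP l) = if l.1.card = 1 then trop ((l.1.sum : ℝ≥0∞) * r)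
                 else trop (⊤ : ℝ≥0∞) := by
  refine ⟨thetaHom r, fun l hl => ?_⟩
  have hval : (thetaHom r) (mP l) = trop (Vv r (mfun l.1)) := rfl
  rw [hval]
  by_cases hc : l.1.card = 1
  · obtain ⟨k, hk⟩ := Multiset.card_eq_one.mp hc
    have hk0 : k ≠ 0 := fun h => l.2 (by rw [hk, h]; exact Multiset.mem_singleton_self 0)
    have hE : Eset (mfun l.1) = {k} := by
      ext n
      rw [mem_Eset_mfun]
      constructor
      · intro h
        rcases eq_or_ne n 0 with rfl | hn
        · rw [Finsupp.single_zero, parts_zero', hk] at h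
          exact absurd h.symm (Multiset.singleton_ne_zero k)
        · rw [parts_single hn, hk] at h
          simpa using h
      · rintro rfl
        rw [parts_single hk0, hk]
    have hsum : l.1.sum = k := by rw [hk]; exact Multiset.sum_singleton k
    rw [if_pos hc, hsum, Vv, hE]
    simp
  · have hE : Eset (mfun l.1) = ∅ := by
      ext n
      rw [mem_Eset_mfun]
      simp only [Set.mem_empty_iff_false, iff_false]
      intro h
      rcases eq_or_ne n 0 with rfl | hn
      · rw [Finsupp.single_zero, parts_zero'] at h
        exact hl h.symm
      · rw [parts_single hn] at h
        exact hc (by rw [← h]; rfl)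
    rw [if_neg hc, Vv, hE]
    simp


end
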